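/- (Schrödinger pair is optimal, Theorem 2.1(3)⇒(1) and primal optimality.) Let (φ,ψ) be admissible, suppose ρ(x,y) := exp((φ(x)+ψ(y)−c(x,y))/ε) is the density of a coupling γ of μ and ν, and suppose c is γ-integrable. Then: (i) for every coupling γ' of μ and ν that is absolutely continuous with density ρ' such that ρ' log ρ' is Lebesgue-integrable and c is γ'-integrable, one has F_ε(γ) ≤ F_ε(γ'); and (ii) for every admissible pair (φ',ψ'), one has D_ε(φ',ψ') ≤ D_ε(φ,ψ). -/

import Mathlib

open MeasureTheory
open scoped NNReal ENNReal

noncomputable section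

abbrev E (d : ℕ) := EuclideanSpace ℝ (Fin d)

def cost {d : ℕ} (x y : E d) : ℝ := (1 / 2) * ‖x - y‖ ^ 2

def Dent {d : ℕ} (ε : ℝ) (μ ν : Measure (E d)) (φ ψ : E d → ℝ) : ℝ :=
  (∫ x, φ x ∂μ) + (∫ y, ψ y ∂ν) -
    ε * ∫ r : E d × E d, Real.exp ((φ r.1 + ψ r.2 - cost r.1 r.2) / ε)

def Admissible {d : ℕ} (ε : ℝ) (μ ν : Measure (E d)) (φ ψ : E d → ℝ) : Prop :=
  Measurable φ ∧ Measurable ψ ∧ Integrable φ μ ∧ Integrable ψ ν ∧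
    Integrable (fun r : E d × E d => Real.exp ((φ r.1 + ψ r.2 - cost r.1 r.2) / ε)) volume

def IsCoupling {d : ℕ} (μ ν : Measure (E d)) (γ : Measure (E d × E d)) : Prop :=
  IsProbabilityMeasure γ ∧ γ.map Prod.fst = μ ∧ γ.map Prod.snd = ν

def Fent {d : ℕ} (ε : ℝ) (γ : Measure (E d × E d)) (ρ : E d × E d → ℝ) : ℝ :=
  (∫ r : E d × E d, cost r.1 r.2 ∂γ) + ε * ∫ r : E d × E d, ρ r * Real.log (ρ r)

/-- Pointwise entropy inequality: `a - b ≤ a log a - a log b`. -/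
lemma klaux {a b : ℝ} (ha : 0 ≤ a) (hb : 0 < b) :
    a - b ≤ a * Real.log a - a * Real.log b := by
  rcases eq_or_lt_of_le ha with h | h
  · rw [← h]
    simp only [zero_mul, sub_self, zero_sub]
    linarith
  · have hlog := Real.log_le_sub_one_of_pos (div_pos hb h)
    rw [Real.log_div hb.ne' h.ne'] at hlog
    have h2 : a * (Real.log b - Real.log a) ≤ a * (b / a - 1) :=
      mul_le_mul_of_nonneg_left hlog ha
    have h3 : a * (b / a) = b := by field_simp
    nlinarith

/-- Integrability and integral transfer along a pushforward. -/
lemma comp_integral {α β : Type*} [MeasurableSpace α] [MeasurableSpace β]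
    {γm : Measure α} {p : α → β} (hp : Measurable p) {μ : Measure β}
    (hmap : γm.map p = μ) {f : β → ℝ} (hf : Measurable f) (hint : Integrable f μ) :
    Integrable (fun a => f (p a)) γm ∧ ∫ a, f (p a) ∂γm = ∫ x, f x ∂μ := by
  subst hmap
  refine ⟨(integrable_map_measure hf.aestronglyMeasurable hp.aemeasurable).mp hint, ?_⟩
  exact (integral_map hp.aemeasurable hf.aestronglyMeasurable).symm

lemma dens_integral {α : Type*} [MeasurableSpace α] (m : Measure α)
    {ρ : α → ℝ} (hm : Measurable ρ) (h0 : ∀ r, 0 ≤ ρ r) (h : α → ℝ) :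
    ∫ r, h r ∂(m.withDensity fun r => ENNReal.ofReal (ρ r)) = ∫ r, ρ r * h r ∂m := by
  rw [show (fun r => ENNReal.ofReal (ρ r)) = (fun r => ((Real.toNNReal (ρ r) : ℝ≥0) : ℝ≥0∞))
      from rfl,
    integral_withDensity_eq_integral_smul hm.real_toNNReal h]
  refine integral_congr_ae (Filter.Eventually.of_forall fun r => ?_)
  show (ρ r).toNNReal • h r = ρ r * h r
  rw [NNReal.smul_def, Real.coe_toNNReal _ (h0 r), smul_eq_mul]

lemma dens_integrable {α : Type*} [MeasurableSpace α] (m : Measure α)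
    {ρ : α → ℝ} (hm : Measurable ρ) (h0 : ∀ r, 0 ≤ ρ r) (h : α → ℝ) :
    Integrable h (m.withDensity fun r => ENNReal.ofReal (ρ r)) ↔
      Integrable (fun r => ρ r * h r) m := by
  rw [show (fun r => ENNReal.ofReal (ρ r)) = (fun r => ((Real.toNNReal (ρ r) : ℝ≥0) : ℝ≥0∞))
      from rfl,
    integrable_withDensity_iff_integrable_smul hm.real_toNNReal]
  have : (fun r => Real.toNNReal (ρ r) • h r) = fun r => ρ r * h r := by
    funext r
    rw [NNReal.smul_def, Real.coe_toNNReal _ (h0 r), smul_eq_mul]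
  rw [this]

lemma dens_one {α : Type*} [MeasurableSpace α] {m : Measure α}
    {ρ : α → ℝ} (hm : Measurable ρ) (h0 : ∀ r, 0 ≤ ρ r)
    (hp : IsProbabilityMeasure (m.withDensity fun r => ENNReal.ofReal (ρ r))) :
    Integrable ρ m ∧ ∫ r, ρ r ∂m = 1 := by
  have hl : ∫⁻ r, ENNReal.ofReal (ρ r) ∂m = 1 := by
    have h1 := hp.measure_univ
    rwa [withDensity_apply _ MeasurableSet.univ, setLIntegral_univ] at h1
  have hnn : ∀ r, (‖ρ r‖ₑ : ℝ≥0∞) = ENNReal.ofReal (ρ r) := fun r =>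
    Real.enorm_eq_ofReal (h0 r)
  have hint : Integrable ρ m := by
    refine ⟨hm.aestronglyMeasurable, ?_⟩
    simp only [HasFiniteIntegral]
    rw [lintegral_congr hnn, hl]
    exact ENNReal.one_lt_top
  refine ⟨hint, ?_⟩
  rw [integral_eq_lintegral_of_nonneg_ae (Filter.Eventually.of_forall h0)
    hm.aestronglyMeasurable, hl]
  simp

theorem schroedinger_pair_optimal {d : ℕ} (hd : 1 ≤ d) {ε : ℝ} (hε : 0 < ε)
    (μ ν : Measure (E d)) [IsProbabilityMeasure μ] [IsProbabilityMeasure ν]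
    (φ ψ : E d → ℝ) (hadm : Admissible ε μ ν φ ψ)
    (ρ : E d × E d → ℝ)
    (hρ : ρ = fun r => Real.exp ((φ r.1 + ψ r.2 - cost r.1 r.2) / ε))
    (γ : Measure (E d × E d))
    (hγdef : γ = volume.withDensity fun r => ENNReal.ofReal (ρ r))
    (hγ : IsCoupling μ ν γ)
    (hcost : Integrable (fun r : E d × E d => cost r.1 r.2) γ) :
    (∀ γ' : Measure (E d × E d), ∀ ρ' : E d × E d → ℝ,
      IsCoupling μ ν γ' → Measurable ρ' → (∀ r, 0 ≤ ρ' r) →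
      γ' = (volume.withDensity fun r => ENNReal.ofReal (ρ' r)) →
      Integrable (fun r => ρ' r * Real.log (ρ' r)) volume →
      Integrable (fun r : E d × E d => cost r.1 r.2) γ' →
      Fent ε γ ρ ≤ Fent ε γ' ρ') ∧
    (∀ φ' ψ' : E d → ℝ, Admissible ε μ ν φ' ψ' →
      Dent ε μ ν φ' ψ' ≤ Dent ε μ ν φ ψ) := by
  obtain ⟨hφm, hψm, hφi, hψi, hexpint⟩ := hadm
  obtain ⟨hγp, hγ1, hγ2⟩ := hγ
  have hcostm : Measurable (fun r : E d × E d => cost r.1 r.2) := by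
    have : Continuous (fun r : E d × E d => cost r.1 r.2) := by
      unfold cost
      exact continuous_const.mul ((continuous_fst.sub continuous_snd).norm.pow 2)
    exact this.measurable
  have hρm : Measurable ρ := by
    rw [hρ]
    exact ((((hφm.comp measurable_fst).add (hψm.comp measurable_snd)).sub
      hcostm).div_const ε).exp
  have hρpos : ∀ r, 0 < ρ r := by
    intro r; simp only [hρ]; exact Real.exp_pos _
  have hρ0 : ∀ r, 0 ≤ ρ r := fun r => (hρpos r).le
  have hlogρ : ∀ r, Real.log (ρ r) = (φ r.1 + ψ r.2 - cost r.1 r.2) / ε := by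
    intro r; simp only [hρ]; exact Real.log_exp _
  have hρint : Integrable ρ volume := by rw [hρ]; exact hexpint
  -- marginal facts for γ
  have hφγ := comp_integral measurable_fst hγ1 hφm hφi
  have hψγ := comp_integral measurable_snd hγ2 hψm hψi
  -- transfer to Lebesgue for γ
  have hIφ : Integrable (fun r : E d × E d => ρ r * φ r.1) volume := by
    rw [← dens_integrable volume hρm hρ0, ← hγdef]; exact hφγ.1
  have hIψ : Integrable (fun r : E d × E d => ρ r * ψ r.2) volume := by
    rw [← dens_integrable volume hρm hρ0, ← hγdef]; exact hψγ.1
  have hIc : Integrable (fun r : E d × E d => ρ r * cost r.1 r.2) volume := by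
    rw [← dens_integrable volume hρm hρ0, ← hγdef]; exact hcost
  have hIφeq : ∫ r : E d × E d, ρ r * φ r.1 = ∫ x, φ x ∂μ := by
    rw [← dens_integral volume hρm hρ0, ← hγdef]; exact hφγ.2
  have hIψeq : ∫ r : E d × E d, ρ r * ψ r.2 = ∫ y, ψ y ∂ν := by
    rw [← dens_integral volume hρm hρ0, ← hγdef]; exact hψγ.2
  have hIceq : ∫ r : E d × E d, ρ r * cost r.1 r.2 = ∫ r : E d × E d, cost r.1 r.2 ∂γ := by
    rw [← dens_integral volume hρm hρ0, ← hγdef]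
  -- ε ρ log ρ = ρ (φ + ψ - c)
  have hmul : ∀ r : E d × E d,
      ε * (ρ r * Real.log (ρ r)) = ρ r * φ r.1 + ρ r * ψ r.2 - ρ r * cost r.1 r.2 := by
    intro r; rw [hlogρ r]; field_simp
  have hIrlr : Integrable (fun r : E d × E d => ρ r * Real.log (ρ r)) volume := by
    have heq : (fun r : E d × E d => ρ r * Real.log (ρ r)) =
        fun r => ε⁻¹ * (ρ r * φ r.1 + ρ r * ψ r.2 - ρ r * cost r.1 r.2) := by
      funext r; rw [← hmul r]; field_simp
    rw [heq]
    exact ((hIφ.add hIψ).sub hIc).const_mul _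
  have hεrlr : ε * ∫ r : E d × E d, ρ r * Real.log (ρ r) =
      (∫ x, φ x ∂μ) + (∫ y, ψ y ∂ν) - ∫ r : E d × E d, cost r.1 r.2 ∂γ := by
    have hIsum : Integrable (fun r : E d × E d => ρ r * φ r.1 + ρ r * ψ r.2) volume :=
      hIφ.add hIψ
    have eA : ∫ r : E d × E d, (ρ r * φ r.1 + ρ r * ψ r.2 - ρ r * cost r.1 r.2) =
        (∫ r : E d × E d, (ρ r * φ r.1 + ρ r * ψ r.2)) -
          ∫ r : E d × E d, ρ r * cost r.1 r.2 := integral_sub hIsum hIc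
    have eB : ∫ r : E d × E d, (ρ r * φ r.1 + ρ r * ψ r.2) =
        (∫ r : E d × E d, ρ r * φ r.1) + ∫ r : E d × E d, ρ r * ψ r.2 :=
      integral_add hIφ hIψ
    rw [← integral_const_mul]
    simp only [hmul]
    rw [eA, eB, hIφeq, hIψeq, hIceq]
  have hFent : Fent ε γ ρ = (∫ x, φ x ∂μ) + (∫ y, ψ y ∂ν) := by
    unfold Fent; rw [hεrlr]; ring
  have hρone := dens_one hρm hρ0 (hγdef ▸ hγp)
  constructor
  · -- primal optimality
    intro γ' ρ' hγ' hρ'm hρ'0 hγ'def hρ'log hc'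
    obtain ⟨hγ'p, hγ'1, hγ'2⟩ := hγ'
    have hφγ' := comp_integral measurable_fst hγ'1 hφm hφi
    have hψγ' := comp_integral measurable_snd hγ'2 hψm hψi
    have hIφ' : Integrable (fun r : E d × E d => ρ' r * φ r.1) volume := by
      rw [← dens_integrable volume hρ'm hρ'0, ← hγ'def]; exact hφγ'.1
    have hIψ' : Integrable (fun r : E d × E d => ρ' r * ψ r.2) volume := by
      rw [← dens_integrable volume hρ'm hρ'0, ← hγ'def]; exact hψγ'.1
    have hIc' : Integrable (fun r : E d × E d => ρ' r * cost r.1 r.2) volume := by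
      rw [← dens_integrable volume hρ'm hρ'0, ← hγ'def]; exact hc'
    have hIφ'eq : ∫ r : E d × E d, ρ' r * φ r.1 = ∫ x, φ x ∂μ := by
      rw [← dens_integral volume hρ'm hρ'0, ← hγ'def]; exact hφγ'.2
    have hIψ'eq : ∫ r : E d × E d, ρ' r * ψ r.2 = ∫ y, ψ y ∂ν := by
      rw [← dens_integral volume hρ'm hρ'0, ← hγ'def]; exact hψγ'.2
    have hIc'eq : ∫ r : E d × E d, ρ' r * cost r.1 r.2
        = ∫ r : E d × E d, cost r.1 r.2 ∂γ' := by
      rw [← dens_integral volume hρ'm hρ'0, ← hγ'def]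
    have hmul' : ∀ r : E d × E d,
        ε * (ρ' r * Real.log (ρ r)) = ρ' r * φ r.1 + ρ' r * ψ r.2 - ρ' r * cost r.1 r.2 := by
      intro r; rw [hlogρ r]; field_simp
    have hIcross : Integrable (fun r : E d × E d => ρ' r * Real.log (ρ r)) volume := by
      have heq : (fun r : E d × E d => ρ' r * Real.log (ρ r)) =
          fun r => ε⁻¹ * (ρ' r * φ r.1 + ρ' r * ψ r.2 - ρ' r * cost r.1 r.2) := by
        funext r; rw [← hmul' r]; field_simp
      rw [heq]
      exact ((hIφ'.add hIψ').sub hIc').const_mul _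
    have hεcross : ε * ∫ r : E d × E d, ρ' r * Real.log (ρ r) =
        (∫ x, φ x ∂μ) + (∫ y, ψ y ∂ν) - ∫ r : E d × E d, cost r.1 r.2 ∂γ' := by
      have hIsum' : Integrable (fun r : E d × E d => ρ' r * φ r.1 + ρ' r * ψ r.2) volume :=
        hIφ'.add hIψ'
      have eA : ∫ r : E d × E d, (ρ' r * φ r.1 + ρ' r * ψ r.2 - ρ' r * cost r.1 r.2) =
          (∫ r : E d × E d, (ρ' r * φ r.1 + ρ' r * ψ r.2)) -
            ∫ r : E d × E d, ρ' r * cost r.1 r.2 := integral_sub hIsum' hIc'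
      have eB : ∫ r : E d × E d, (ρ' r * φ r.1 + ρ' r * ψ r.2) =
          (∫ r : E d × E d, ρ' r * φ r.1) + ∫ r : E d × E d, ρ' r * ψ r.2 :=
        integral_add hIφ' hIψ'
      rw [← integral_const_mul]
      simp only [hmul']
      rw [eA, eB, hIφ'eq, hIψ'eq, hIc'eq]
    have hρ'one := dens_one hρ'm hρ'0 (hγ'def ▸ hγ'p)
    have hpt : (fun r : E d × E d => ρ' r - ρ r) ≤
        fun r => ρ' r * Real.log (ρ' r) - ρ' r * Real.log (ρ r) :=
      fun r => klaux (hρ'0 r) (hρpos r)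
    have hIsubL : Integrable (fun r : E d × E d => ρ' r - ρ r) volume := hρ'one.1.sub hρint
    have hIsubR : Integrable
        (fun r : E d × E d => ρ' r * Real.log (ρ' r) - ρ' r * Real.log (ρ r)) volume :=
      hρ'log.sub hIcross
    have hmono : ∫ r : E d × E d, (ρ' r - ρ r) ≤
        ∫ r : E d × E d, (ρ' r * Real.log (ρ' r) - ρ' r * Real.log (ρ r)) :=
      integral_mono hIsubL hIsubR hpt
    have e1 : ∫ r : E d × E d, (ρ' r - ρ r) =
        (∫ r : E d × E d, ρ' r) - ∫ r : E d × E d, ρ r := integral_sub hρ'one.1 hρint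
    have e2 : ∫ r : E d × E d, (ρ' r * Real.log (ρ' r) - ρ' r * Real.log (ρ r)) =
        (∫ r : E d × E d, ρ' r * Real.log (ρ' r)) -
          ∫ r : E d × E d, ρ' r * Real.log (ρ r) := integral_sub hρ'log hIcross
    rw [e1, e2, hρ'one.2, hρone.2] at hmono
    have hle : ∫ r : E d × E d, ρ' r * Real.log (ρ r)
        ≤ ∫ r : E d × E d, ρ' r * Real.log (ρ' r) := by linarith
    have hle2 := mul_le_mul_of_nonneg_left hle hε.le
    rw [hFent]
    unfold Fent
    linarith [hεcross]
  · -- dual optimality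
    intro φ' ψ' hadm'
    obtain ⟨hφ'm, hψ'm, hφ'i, hψ'i, hρ''i⟩ := hadm'
    set ρ'' : E d × E d → ℝ :=
      fun r => Real.exp ((φ' r.1 + ψ' r.2 - cost r.1 r.2) / ε) with hρ''
    have hρ''pos : ∀ r, 0 < ρ'' r := fun r => Real.exp_pos _
    have hlogρ'' : ∀ r, Real.log (ρ'' r) = (φ' r.1 + ψ' r.2 - cost r.1 r.2) / ε :=
      fun r => Real.log_exp _
    have hφ'γ := comp_integral measurable_fst hγ1 hφ'm hφ'i
    have hψ'γ := comp_integral measurable_snd hγ2 hψ'm hψ'i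
    have hIφ'' : Integrable (fun r : E d × E d => ρ r * φ' r.1) volume := by
      rw [← dens_integrable volume hρm hρ0, ← hγdef]; exact hφ'γ.1
    have hIψ'' : Integrable (fun r : E d × E d => ρ r * ψ' r.2) volume := by
      rw [← dens_integrable volume hρm hρ0, ← hγdef]; exact hψ'γ.1
    have hIφ''eq : ∫ r : E d × E d, ρ r * φ' r.1 = ∫ x, φ' x ∂μ := by
      rw [← dens_integral volume hρm hρ0, ← hγdef]; exact hφ'γ.2
    have hIψ''eq : ∫ r : E d × E d, ρ r * ψ' r.2 = ∫ y, ψ' y ∂ν := by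
      rw [← dens_integral volume hρm hρ0, ← hγdef]; exact hψ'γ.2
    have hmul'' : ∀ r : E d × E d,
        ε * (ρ r * Real.log (ρ'' r)) = ρ r * φ' r.1 + ρ r * ψ' r.2 - ρ r * cost r.1 r.2 := by
      intro r; rw [hlogρ'' r]; field_simp
    have hIcross'' : Integrable (fun r : E d × E d => ρ r * Real.log (ρ'' r)) volume := by
      have heq : (fun r : E d × E d => ρ r * Real.log (ρ'' r)) =
          fun r => ε⁻¹ * (ρ r * φ' r.1 + ρ r * ψ' r.2 - ρ r * cost r.1 r.2) := by
        funext r; rw [← hmul'' r]; field_simp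
      rw [heq]
      exact ((hIφ''.add hIψ'').sub hIc).const_mul _
    have hεcross'' : ε * ∫ r : E d × E d, ρ r * Real.log (ρ'' r) =
        (∫ x, φ' x ∂μ) + (∫ y, ψ' y ∂ν) - ∫ r : E d × E d, cost r.1 r.2 ∂γ := by
      have hIsum'' : Integrable (fun r : E d × E d => ρ r * φ' r.1 + ρ r * ψ' r.2) volume :=
        hIφ''.add hIψ''
      have eA : ∫ r : E d × E d, (ρ r * φ' r.1 + ρ r * ψ' r.2 - ρ r * cost r.1 r.2) =
          (∫ r : E d × E d, (ρ r * φ' r.1 + ρ r * ψ' r.2)) -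
            ∫ r : E d × E d, ρ r * cost r.1 r.2 := integral_sub hIsum'' hIc
      have eB : ∫ r : E d × E d, (ρ r * φ' r.1 + ρ r * ψ' r.2) =
          (∫ r : E d × E d, ρ r * φ' r.1) + ∫ r : E d × E d, ρ r * ψ' r.2 :=
        integral_add hIφ'' hIψ''
      rw [← integral_const_mul]
      simp only [hmul'']
      rw [eA, eB, hIφ''eq, hIψ''eq, hIceq]
    have hpt : (fun r : E d × E d => ρ r - ρ'' r) ≤
        fun r => ρ r * Real.log (ρ r) - ρ r * Real.log (ρ'' r) :=
      fun r => klaux (hρ0 r) (hρ''pos r)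
    have hIsubL : Integrable (fun r : E d × E d => ρ r - ρ'' r) volume := hρint.sub hρ''i
    have hIsubR : Integrable
        (fun r : E d × E d => ρ r * Real.log (ρ r) - ρ r * Real.log (ρ'' r)) volume :=
      hIrlr.sub hIcross''
    have hmono : ∫ r : E d × E d, (ρ r - ρ'' r) ≤
        ∫ r : E d × E d, (ρ r * Real.log (ρ r) - ρ r * Real.log (ρ'' r)) :=
      integral_mono hIsubL hIsubR hpt
    have e1 : ∫ r : E d × E d, (ρ r - ρ'' r) =
        (∫ r : E d × E d, ρ r) - ∫ r : E d × E d, ρ'' r := integral_sub hρint hρ''i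
    have e2 : ∫ r : E d × E d, (ρ r * Real.log (ρ r) - ρ r * Real.log (ρ'' r)) =
        (∫ r : E d × E d, ρ r * Real.log (ρ r)) -
          ∫ r : E d × E d, ρ r * Real.log (ρ'' r) := integral_sub hIrlr hIcross''
    rw [e1, e2] at hmono
    have hle2 := mul_le_mul_of_nonneg_left hmono hε.le
    rw [mul_sub, mul_sub, hεrlr, hεcross''] at hle2
    unfold Dent
    rw [← hρ]
    linarith
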